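/- For the uniform distribution on the unit circle with M-level dithered quantization in the angular domain (unlimited common randomness, N → ∞), the achievable distortion under perfect perception (P = 0) is E[‖X − X̂‖²] = 2 − 2M sin(π/M)/π, which is strictly smaller than the value 2 − 2M² sin²(π/M)/π² achievable with no common randomness, for every integer M ≥ 2. -/

import Mathlib

open MeasureTheory ProbabilityTheory Real

/-- The point of the unit circle in `ℝ²` at angle `θ`. -/
noncomputable def pt (θ : ℝ) : EuclideanSpace ℝ (Fin 2) :=
  (WithLp.equiv 2 (Fin 2 → ℝ)).symm ![Real.cos θ, Real.sin θ]

/-- Uniform probability measure on the interval `[a, b)`. -/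
noncomputable def unifIco (a b : ℝ) : Measure ℝ :=
  (ENNReal.ofReal (b - a))⁻¹ • volume.restrict (Set.Ico a b)

/-- Joint law of the source angle `Θ` (uniform on `[0, 2π)`) and an independent dither `U`
uniform on `[0, 2π/M)` (the unlimited-common-randomness limit `N → ∞`). -/
noncomputable def μ10 (M : ℕ) : Measure (ℝ × ℝ) :=
  (unifIco 0 (2 * π)).prod (unifIco 0 (2 * π / M))

/-- The source `X = (cos Θ, sin Θ)` uniform on the unit circle. -/
noncomputable def X10 (ω : ℝ × ℝ) : EuclideanSpace ℝ (Fin 2) := pt ω.1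

/-- `M`-level dithered quantization in the angular domain: subtract the dither, round to the
grid `(2π/M)ℤ`, and add the dither back; the reconstruction lies on the unit circle. -/
noncomputable def Xh10 (M : ℕ) (ω : ℝ × ℝ) : EuclideanSpace ℝ (Fin 2) :=
  pt ((2 * π / M) * (round ((ω.1 - ω.2) * M / (2 * π)) : ℤ) + ω.2)

section Aux

open Set

lemma measurable_round_real : Measurable (fun x : ℝ => (round x : ℝ)) := by
  have h1 : Measurable (fun x : ℝ => (⌊x + 1/2⌋ : ℤ)) := (measurable_id.add_const _).floor
  have h2 : Measurable (fun k : ℤ => (k : ℝ)) := measurable_from_top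
  simpa [round_eq, Function.comp_def] using h2.comp h1

lemma pt_continuous : Continuous pt := by
  apply Continuous.comp
  · exact (PiLp.continuous_toLp (p := 2) (β := fun _ : Fin 2 => ℝ))
  · apply continuous_pi
    intro i
    fin_cases i <;> simp <;> fun_prop

lemma pt_measurable : Measurable pt := pt_continuous.measurable

lemma pt_periodic (x : ℝ) : pt (x + 2 * π) = pt x := by
  simp [pt, Real.cos_add_two_pi, Real.sin_add_two_pi]

lemma norm_pt_sub (a b : ℝ) : ‖pt a - pt b‖ ^ 2 = 2 - 2 * Real.cos (a - b) := by
  have h : ‖pt a - pt b‖ ^ 2 =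
      (Real.cos a - Real.cos b) ^ 2 + (Real.sin a - Real.sin b) ^ 2 := by
    rw [EuclideanSpace.norm_eq, Real.sq_sqrt (by positivity)]
    simp [pt, Fin.sum_univ_two, WithLp.equiv_symm_apply, PiLp.toLp_apply, Real.norm_eq_abs, sq_abs]
  rw [h, Real.cos_sub]
  nlinarith [Real.sin_sq_add_cos_sq a, Real.sin_sq_add_cos_sq b]

lemma unifIco_apply (a b : ℝ) (s : Set ℝ) (hs : MeasurableSet s) :
    unifIco a b s = (ENNReal.ofReal (b - a))⁻¹ * volume (s ∩ Ico a b) := by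
  rw [unifIco, Measure.smul_apply, Measure.restrict_apply hs]
  rfl

lemma unifIco_prob {a b : ℝ} (hab : a < b) : IsProbabilityMeasure (unifIco a b) := by
  constructor
  rw [unifIco_apply a b _ MeasurableSet.univ]
  rw [Set.univ_inter, Real.volume_Ico]
  rw [ENNReal.inv_mul_cancel (by simp only [ne_eq, ENNReal.ofReal_eq_zero, not_le]; linarith) ENNReal.ofReal_ne_top]

/-- translation of a periodic set -/
lemma meas_translate {B : Set ℝ} {p : ℝ} (hper : ∀ x, x + p ∈ B ↔ x ∈ B) (a b : ℝ) :
    volume (B ∩ Ico (a + p) (b + p)) = volume (B ∩ Ico a b) := by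
  rw [← measure_preimage_add_right volume p (B ∩ Ico (a + p) (b + p))]
  congr 1
  ext x
  simp only [Set.mem_preimage, Set.mem_inter_iff, Set.mem_Ico, hper x]
  constructor <;> rintro ⟨h1, h2, h3⟩ <;> exact ⟨h1, by linarith, by linarith⟩

lemma meas_translate_z {B : Set ℝ} {p : ℝ} (hper : ∀ x, x + p ∈ B ↔ x ∈ B) (k : ℤ) (a b : ℝ) :
    volume (B ∩ Ico (a + k * p) (b + k * p)) = volume (B ∩ Ico a b) := by
  induction k using Int.induction_on with
  | zero => simp
  | succ n ih =>
      push_cast at ih ⊢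
      rw [show a + ((n : ℝ) + 1) * p = a + (n : ℝ) * p + p by ring,
        show b + ((n : ℝ) + 1) * p = b + (n : ℝ) * p + p by ring,
        meas_translate hper, ih]
  | pred n ih =>
      push_cast at ih ⊢
      have h := meas_translate hper (a + (-(n : ℝ) - 1) * p) (b + (-(n : ℝ) - 1) * p)
      rw [show a + (-(n : ℝ) - 1) * p + p = a + -(n : ℝ) * p by ring,
        show b + (-(n : ℝ) - 1) * p + p = b + -(n : ℝ) * p by ring] at h
      rw [← h, ih]

/-- tiling an interval of length n*h into n cells -/
lemma meas_tile {B : Set ℝ} (hB : MeasurableSet B) {h : ℝ} (hh : 0 ≤ h) (a : ℝ) (n : ℕ) :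
    volume (B ∩ Ico a (a + n * h)) =
      ∑ k ∈ Finset.range n, volume (B ∩ Ico (a + h * k) (a + h * k + h)) := by
  induction n with
  | zero => simp
  | succ n ih =>
      have hsplit : Ico a (a + (n + 1 : ℕ) * h) = Ico a (a + n * h) ∪ Ico (a + n * h) (a + n * h + h) := by
        rw [Set.Ico_union_Ico_eq_Ico (by nlinarith [Nat.cast_nonneg (α := ℝ) n]) (by linarith)]
        congr 1
        push_cast
        ring
      rw [hsplit, Set.inter_union_distrib_left,
        measure_union (Disjoint.mono Set.inter_subset_right Set.inter_subset_right
          (Set.Ico_disjoint_Ico_same)) (hB.inter measurableSet_Ico),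
        ih, Finset.sum_range_succ]
      congr 2
      ring

/-- the measure of a periodic set in any window of one period is the same -/
lemma meas_periodic_Ico {B : Set ℝ} (hB : MeasurableSet B) {p : ℝ} (hp : 0 < p)
    (hper : ∀ x, x + p ∈ B ↔ x ∈ B) (c : ℝ) :
    volume (B ∩ Ico c (c + p)) = volume (B ∩ Ico 0 p) := by
  have key : ∀ d, 0 ≤ d → d ≤ p → volume (B ∩ Ico d (d + p)) = volume (B ∩ Ico 0 p) := by
    intro d hd0 hdp
    have h1 : Ico (0 : ℝ) p = Ico 0 d ∪ Ico d p := (Set.Ico_union_Ico_eq_Ico hd0 hdp).symm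
    have h2 : Ico d (d + p) = Ico d p ∪ Ico p (d + p) :=
      (Set.Ico_union_Ico_eq_Ico (by linarith) (by linarith)).symm
    have e1 : volume (B ∩ Ico p (d + p)) = volume (B ∩ Ico 0 d) := by
      have := meas_translate hper 0 d
      simpa using this
    rw [h1, h2, Set.inter_union_distrib_left, Set.inter_union_distrib_left,
      measure_union (Disjoint.mono Set.inter_subset_right Set.inter_subset_right
        (Set.Ico_disjoint_Ico_same)) (hB.inter measurableSet_Ico),
      measure_union (Disjoint.mono Set.inter_subset_right Set.inter_subset_right
        (Set.Ico_disjoint_Ico_same)) (hB.inter measurableSet_Ico),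
      e1, add_comm]
  have hred : volume (B ∩ Ico c (c + p)) = volume (B ∩ Ico (c - ⌊c / p⌋ * p) (c - ⌊c / p⌋ * p + p)) := by
    have := meas_translate_z hper ⌊c / p⌋ (c - ⌊c / p⌋ * p) (c - ⌊c / p⌋ * p + p)
    rw [← this]
    congr 2 <;> ring
  rw [hred]
  apply key
  · have := Int.sub_floor_div_mul_nonneg c hp
    linarith
  · have := Int.sub_floor_div_mul_lt c hp
    linarith

end Aux

section Main

open Set

variable {M : ℕ}

lemma round_eq_of_mem (hM : 0 < (M : ℝ)) (u : ℝ) (k : ℤ) {θ : ℝ}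
    (h1 : u + 2 * π / M * k - 2 * π / M / 2 ≤ θ) (h2 : θ < u + 2 * π / M * k + 2 * π / M / 2) :
    round ((θ - u) * M / (2 * π)) = k := by
  have hπ := Real.pi_pos
  have hh : (0 : ℝ) < 2 * π / M := by positivity
  set x := (θ - u) * M / (2 * π) with hx
  have hθx : θ - u = x * (2 * π / M) := by
    rw [hx]; field_simp
  rw [round_eq, Int.floor_eq_iff]
  constructor
  · have : ((k : ℝ) - 1 / 2) * (2 * π / M) ≤ x * (2 * π / M) := by nlinarith
    have := le_of_mul_le_mul_right (by linarith : ((k : ℝ) - 1 / 2) * (2 * π / M) ≤ x * (2 * π / M)) hh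
    push_cast
    linarith
  · have : x * (2 * π / M) < ((k : ℝ) + 1 / 2) * (2 * π / M) := by nlinarith
    have := lt_of_mul_lt_mul_right (by linarith : x * (2 * π / M) < ((k : ℝ) + 1 / 2) * (2 * π / M)) hh.le
    push_cast
    linarith

lemma measurable_g : Measurable (fun ω : ℝ × ℝ => 2 * π / M * (round ((ω.1 - ω.2) * M / (2 * π)) : ℤ) + ω.2) := by
  apply Measurable.add _ measurable_snd
  apply Measurable.const_mul
  exact measurable_round_real.comp (((measurable_fst.sub measurable_snd).mul_const _).div_const _)

end Main


lemma part1 {M : ℕ} (hM : 2 ≤ M) : (μ10 M).map (Xh10 M) = (μ10 M).map X10 := by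
  have hπ := Real.pi_pos
  have hM0 : (0:ℝ) < M := by exact_mod_cast (by omega : 0 < M)
  set h : ℝ := 2 * π / M with hh_def
  have hh : 0 < h := div_pos (by positivity) hM0
  have hMh : (M : ℝ) * h = 2 * π := by rw [hh_def]; field_simp
  haveI : IsProbabilityMeasure (unifIco 0 (2*π)) := unifIco_prob (by positivity)
  haveI : IsProbabilityMeasure (unifIco 0 (2*π/M)) := unifIco_prob (by rw [← hh_def]; exact hh)
  have hg := measurable_g (M := M)
  have hXh : Measurable (Xh10 M) := pt_measurable.comp hg
  have hX : Measurable (X10) := pt_measurable.comp measurable_fst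
  ext S hS
  rw [Measure.map_apply hXh hS, Measure.map_apply hX hS]
  set A : Set ℝ := pt ⁻¹' S with hA_def
  have hAm : MeasurableSet A := pt_measurable hS
  have hAper : ∀ x, x + 2*π ∈ A ↔ x ∈ A := fun x => by
    simp only [hA_def, Set.mem_preimage, pt_periodic]
  have hpre1 : Xh10 M ⁻¹' S =
      (fun ω : ℝ×ℝ => 2*π/M * (round ((ω.1-ω.2)*M/(2*π)) : ℤ) + ω.2) ⁻¹' A := rfl
  have hpre2 : X10 ⁻¹' S = A ×ˢ Set.univ := by
    ext ω; simp [X10, hA_def]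
  rw [hpre1, hpre2, μ10, Measure.prod_prod, measure_univ, mul_one,
    Measure.prod_apply_symm (hg hAm)]
  -- slice computation
  have slice : ∀ u : ℝ,
      unifIco 0 (2*π) ((fun θ => (θ, u)) ⁻¹'
        ((fun ω : ℝ×ℝ => 2*π/M * (round ((ω.1-ω.2)*M/(2*π)) : ℤ) + ω.2) ⁻¹' A))
      = (ENNReal.ofReal (2*π))⁻¹ *
          ∑ k ∈ Finset.range M, ((fun v => h * k + v) ⁻¹' A).indicator
            (fun _ => ENNReal.ofReal h) u := by
    intro u
    have hBmem : ∀ θ : ℝ, θ ∈ ((fun θ : ℝ => (θ, u)) ⁻¹'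
        ((fun ω : ℝ×ℝ => 2*π/M * (round ((ω.1-ω.2)*M/(2*π)) : ℤ) + ω.2) ⁻¹' A)) ↔
        2*π/M * (round ((θ-u)*M/(2*π)) : ℤ) + u ∈ A := fun θ => Iff.rfl
    set B : Set ℝ := (fun θ : ℝ => (θ, u)) ⁻¹'
        ((fun ω : ℝ×ℝ => 2*π/M * (round ((ω.1-ω.2)*M/(2*π)) : ℤ) + ω.2) ⁻¹' A) with hB_def
    have hBm : MeasurableSet B := (hg.comp (measurable_prodMk_right)) hAm
    have hBper : ∀ θ, θ + 2*π ∈ B ↔ θ ∈ B := by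
      intro θ
      rw [hBmem, hBmem]
      have harg : ((θ + 2*π) - u)*M/(2*π) = (θ-u)*M/(2*π) + (M:ℤ) := by
        push_cast; field_simp; ring
      rw [harg, round_add_intCast]
      have hval : 2*π/M * ((round ((θ-u)*M/(2*π)) + (M:ℤ) : ℤ) : ℝ) + u
          = (2*π/M * (round ((θ-u)*M/(2*π)) : ℤ) + u) + 2*π := by
        push_cast
        field_simp
        ring
      rw [hval, hAper]
    rw [unifIco_apply _ _ _ hBm, sub_zero]
    congr 1
    rw [← meas_periodic_Ico hBm (by positivity) hBper (u - h/2)]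
    have h2pi : u - h/2 + 2*π = u - h/2 + M * h := by rw [hMh]
    rw [h2pi, meas_tile hBm hh.le (u - h/2) M]
    apply Finset.sum_congr rfl
    intro k hk
    by_cases hkA : h * k + u ∈ A
    · have hset : B ∩ Set.Ico (u - h/2 + h*k) (u - h/2 + h*k + h)
          = Set.Ico (u - h/2 + h*k) (u - h/2 + h*k + h) := by
        apply Set.eq_of_subset_of_subset Set.inter_subset_right
        intro θ hθ
        refine ⟨?_, hθ⟩
        rw [Set.mem_Ico] at hθ
        rw [hBmem]
        have hround : round ((θ-u)*M/(2*π)) = (k : ℤ) := by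
          apply round_eq_of_mem hM0 u (k : ℤ)
          · push_cast; rw [← hh_def]; linarith [hθ.1]
          · push_cast; rw [← hh_def]; linarith [hθ.2]
        rw [hround]
        have : 2*π/M * ((k:ℤ):ℝ) + u = h * k + u := by rw [hh_def]; push_cast; ring
        rw [this]
        exact hkA
      rw [hset, Real.volume_Ico, Set.indicator_of_mem]
      · congr 1; ring
      · show h * k + u ∈ A; exact hkA
    · have hset : B ∩ Set.Ico (u - h/2 + h*k) (u - h/2 + h*k + h) = ∅ := by
        apply Set.eq_empty_of_forall_notMem
        rintro θ ⟨hθB, hθI⟩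
        rw [Set.mem_Ico] at hθI
        rw [hBmem] at hθB
        have hround : round ((θ-u)*M/(2*π)) = (k : ℤ) := by
          apply round_eq_of_mem hM0 u (k : ℤ)
          · push_cast; rw [← hh_def]; linarith [hθI.1]
          · push_cast; rw [← hh_def]; linarith [hθI.2]
        rw [hround] at hθB
        apply hkA
        have : 2*π/M * ((k:ℤ):ℝ) + u = h * k + u := by rw [hh_def]; push_cast; ring
        rw [this] at hθB
        exact hθB
      rw [hset, Set.indicator_of_notMem]
      · simp
      · show ¬ (h * k + u ∈ A); exact hkA
  rw [lintegral_congr slice]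
  have hTk : ∀ k : ℕ, MeasurableSet ((fun v : ℝ => h * k + v) ⁻¹' A) :=
    fun k => (measurable_const_add _) hAm
  have hmeas_sum : Measurable (fun u : ℝ => ∑ k ∈ Finset.range M,
      ((fun v => h * k + v) ⁻¹' A).indicator (fun _ => ENNReal.ofReal h) u) :=
    Finset.measurable_sum _ (fun k _ => measurable_const.indicator (hTk k))
  rw [unifIco, lintegral_smul_measure, lintegral_const_mul _ hmeas_sum,
    lintegral_finset_sum _ (fun k _ => measurable_const.indicator (hTk k))]
  have hterm : ∀ k ∈ Finset.range M,
      ∫⁻ u, ((fun v => h * k + v) ⁻¹' A).indicator (fun _ => ENNReal.ofReal h) u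
        ∂(volume.restrict (Set.Ico 0 (2*π/M)))
      = ENNReal.ofReal h * volume (A ∩ Set.Ico (0 + h * k) (0 + h * k + h)) := by
    intro k _
    rw [lintegral_indicator_const (hTk k), Measure.restrict_apply (hTk k)]
    congr 1
    have hset : (fun v : ℝ => h * k + v) ⁻¹' A ∩ Set.Ico 0 (2*π/M)
        = (fun v : ℝ => h * k + v) ⁻¹' (A ∩ Set.Ico (0 + h * k) (0 + h * k + h)) := by
      rw [← hh_def, Set.preimage_inter]
      congr 1
      ext v
      simp only [Set.mem_preimage, Set.mem_Ico]
      constructor <;> rintro ⟨h1, h2⟩ <;> constructor <;> linarith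
    rw [hset, measure_preimage_add]
  rw [Finset.sum_congr rfl hterm, ← Finset.mul_sum, ← meas_tile hAm hh.le 0 M]
  rw [show (0:ℝ) + M * h = 2*π by rw [hMh]; ring]
  rw [unifIco_apply _ _ _ hAm, sub_zero]
  rw [show (2 * π / (M:ℝ)) = h from hh_def.symm]
  rw [smul_eq_mul]
  rw [show (ENNReal.ofReal h)⁻¹ * ((ENNReal.ofReal (2*π))⁻¹ *
        (ENNReal.ofReal h * volume (A ∩ Set.Ico 0 (2*π))))
      = ((ENNReal.ofReal h)⁻¹ * ENNReal.ofReal h) *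
        ((ENNReal.ofReal (2*π))⁻¹ * volume (A ∩ Set.Ico 0 (2*π))) by ring,
    ENNReal.inv_mul_cancel (by simp only [ne_eq, ENNReal.ofReal_eq_zero, not_le]; linarith)
      ENNReal.ofReal_ne_top, one_mul, sub_zero]


lemma integral_unifIco (a b : ℝ) (hab : a ≤ b) (f : ℝ → ℝ) :
    ∫ x, f x ∂(unifIco a b) = (b - a)⁻¹ * ∫ x in a..b, f x := by
  rw [unifIco, integral_smul_measure, restrict_Ico_eq_restrict_Ioc,
    intervalIntegral.integral_of_le hab]
  simp [ENNReal.toReal_inv, ENNReal.toReal_ofReal (by linarith : (0:ℝ) ≤ b - a)]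

lemma part2 {M : ℕ} (hM : 2 ≤ M) :
    ∫ ω, ‖X10 ω - Xh10 M ω‖ ^ 2 ∂(μ10 M) = 2 - 2 * M * Real.sin (π / M) / π := by
  have hπ := Real.pi_pos
  have hM0 : (0:ℝ) < M := by exact_mod_cast (by omega : 0 < M)
  set h : ℝ := 2 * π / M with hh_def
  have hh : 0 < h := div_pos (by positivity) hM0
  haveI : IsProbabilityMeasure (unifIco 0 (2*π)) := unifIco_prob (by positivity)
  haveI : IsProbabilityMeasure (unifIco 0 (2*π/M)) := unifIco_prob (by rw [← hh_def]; exact hh)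
  haveI : IsProbabilityMeasure (μ10 M) := by rw [μ10]; infer_instance
  set q : ℝ → ℝ := fun x => 2 - 2 * Real.cos (x - 2*π/M * (round (x*M/(2*π)) : ℤ)) with hq_def
  have hqeq : ∀ ω : ℝ×ℝ, ‖X10 ω - Xh10 M ω‖^2 = q (ω.1 - ω.2) := by
    intro ω
    rw [X10, Xh10, norm_pt_sub, hq_def]
    show _ = 2 - 2 * Real.cos ((ω.1-ω.2) - 2*π/M * (round ((ω.1-ω.2)*M/(2*π)) : ℤ))
    congr 1
    congr 1
    congr 1
    ring
  have hqmeas : Measurable q := by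
    apply Measurable.sub measurable_const
    apply Measurable.const_mul
    apply Real.measurable_cos.comp
    exact measurable_id.sub
      ((measurable_round_real.comp ((measurable_id.mul_const _).div_const _)).const_mul _)
  have hqbound : ∀ x, ‖q x‖ ≤ 4 := by
    intro x
    simp only [hq_def, Real.norm_eq_abs]
    rw [abs_le]
    constructor <;>
      nlinarith [Real.cos_le_one (x - 2*π/M * (round (x*M/(2*π)) : ℤ)),
        Real.neg_one_le_cos (x - 2*π/M * (round (x*M/(2*π)) : ℤ))]
  have hqper : Function.Periodic q h := by
    intro x
    have e : (x + h)*M/(2*π) = x*M/(2*π) + 1 := by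
      rw [hh_def]; field_simp
    simp only [hq_def]
    rw [e, round_add_one]
    congr 2
    push_cast
    rw [hh_def]
    field_simp
    ring
  have hint : Integrable (fun ω : ℝ×ℝ => q (ω.1 - ω.2)) (μ10 M) := by
    refine Integrable.mono' (integrable_const 4)
      ((hqmeas.comp (measurable_fst.sub measurable_snd)).aestronglyMeasurable)
      (Filter.Eventually.of_forall fun ω => hqbound _)
  have hround0 : ∀ x : ℝ, -(h/2) < x → x < h/2 → round (x*M/(2*π)) = 0 := by
    intro x h1 h2
    have := round_eq_of_mem (M := M) hM0 0 0 (θ := x) (by push_cast; rw [← hh_def]; linarith)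
      (by push_cast; rw [← hh_def]; linarith)
    simpa using this
  have inner : ∀ θ : ℝ, ∫ u, q (θ - u) ∂(unifIco 0 (2*π/M)) = 2 - 2*M*Real.sin (π/M)/π := by
    intro θ
    rw [integral_unifIco _ _ (by rw [← hh_def]; linarith) _, sub_zero, ← hh_def]
    rw [intervalIntegral.integral_comp_sub_left q θ]
    rw [show θ - 0 = (θ - h) + h by ring, hqper.intervalIntegral_add_eq (θ - h) (-(h/2))]
    have hae : ∀ᵐ x : ℝ ∂volume, x ≠ h/2 := by
      rw [ae_iff]
      simpa using measure_singleton (h/2)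
    have hcongr : ∫ x in -(h/2)..(-(h/2) + h), q x = ∫ x in -(h/2)..(-(h/2) + h), (2 - 2*Real.cos x) := by
      apply intervalIntegral.integral_congr_ae
      refine hae.mono fun x hx hxI => ?_
      rw [Set.uIoc_of_le (by linarith)] at hxI
      rw [Set.mem_Ioc] at hxI
      have hx2 : x < h/2 := lt_of_le_of_ne (by linarith [hxI.2]) (by exact hx)
      simp only [hq_def]
      rw [hround0 x (by linarith [hxI.1]) hx2]
      norm_num
    rw [hcongr, intervalIntegral.integral_sub intervalIntegrable_const
      ((Real.continuous_cos.const_mul 2).intervalIntegrable _ _),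
      intervalIntegral.integral_const, intervalIntegral.integral_const_mul, integral_cos]
    have hh2 : -(h/2) + h = h/2 := by ring
    rw [hh2, Real.sin_neg, show h/2 = π/M by rw [hh_def]; ring]
    simp only [smul_eq_mul]
    rw [hh_def]
    have hM' : (M:ℝ) ≠ 0 := ne_of_gt hM0
    field_simp
    ring
  rw [integral_congr_ae (Filter.Eventually.of_forall hqeq), μ10, integral_prod _ hint]
  rw [integral_congr_ae (Filter.Eventually.of_forall inner)]
  simp

/-- With `M`-level dithered quantization in the angular domain (unlimited common randomness),
the reconstruction is perceptually perfect (`p_X̂ = p_X`) and achieves distortion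
`E[‖X − X̂‖²] = 2 − 2M sin(π/M)/π`, which is strictly smaller than the perfect-perception
distortion `2 − 2M² sin²(π/M)/π²` achievable with no common randomness, for every `M ≥ 2`. -/
theorem stmt10 (M : ℕ) (hM : 2 ≤ M) :
    (μ10 M).map (Xh10 M) = (μ10 M).map X10 ∧
    ∫ ω, ‖X10 ω - Xh10 M ω‖ ^ 2 ∂(μ10 M) = 2 - 2 * M * Real.sin (π / M) / π ∧
    2 - 2 * M * Real.sin (π / M) / π < 2 - 2 * M ^ 2 * Real.sin (π / M) ^ 2 / π ^ 2 := by
  have hπ := Real.pi_pos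
  have hM0 : (0:ℝ) < M := by exact_mod_cast (by omega : 0 < M)
  have hM2 : (2:ℝ) ≤ M := by exact_mod_cast hM
  refine ⟨part1 hM, part2 hM, ?_⟩
  have hx : 0 < π / M := by positivity
  have hxπ : π / M < π := by
    rw [div_lt_iff₀ hM0]
    nlinarith
  have hs : 0 < Real.sin (π / M) := Real.sin_pos_of_pos_of_lt_pi hx hxπ
  have hslt : Real.sin (π / M) < π / M := Real.sin_lt hx
  have hc : (M : ℝ) * Real.sin (π / M) < π := by
    have := mul_lt_mul_of_pos_left hslt hM0
    rw [mul_div_cancel₀ _ (ne_of_gt hM0)] at this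
    linarith
  have hkey : 2 * M ^ 2 * Real.sin (π / M) ^ 2 / π ^ 2 < 2 * M * Real.sin (π / M) / π := by
    rw [div_lt_div_iff₀ (by positivity) hπ]
    nlinarith [mul_pos (mul_pos hM0 hs) hπ]
  linarith
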